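/- arXiv:1309.2456 — 3 statements merged into one kernel-verified Lean document; each statement's English description precedes it below -/
import Mathlib

section
/- Let M be a finite monoid. Then there exists k ∈ ℕ such that for every tuple (a₁, …, a_k) ∈ M^k, there exist indices 1 ≤ i₁ < i₂ ≤ k+1 such that the product a = a_{i₁} · a_{i₁+1} ⋯ a_{i₂−1} is idempotent, i.e. a·a = a. -/
section Aux

variable {M : Type*} [Monoid M]

/-- Product of the segment of `l` from index `a` (inclusive) to `b` (exclusive). -/
def segP (l : List M) (a b : ℕ) : M := ((l.drop a).take (b - a)).prod

lemma take_prod_segP (l : List M) {a b : ℕ} (h : a ≤ b) :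
    (l.take a).prod * segP l a b = (l.take b).prod := by
  have hb : b = a + (b - a) := by omega
  rw [segP, ← List.prod_append, ← List.take_add, ← hb]

lemma segP_append (l : List M) {a b c : ℕ} (hab : a ≤ b) (hbc : b ≤ c) :
    segP l a b * segP l b c = segP l a c := by
  unfold segP
  rw [← List.prod_append]
  congr 1
  have h3 : c - a = (b - a) + (c - b) := by omega
  rw [h3, List.take_add, List.drop_drop, show a + (b - a) = b from by omega]

lemma segP_self (l : List M) (a : ℕ) : segP l a a = 1 := by
  simp [segP]

lemma tele (l : List M) (g : ℕ → ℕ) (hg : Monotone g) (L : List M)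
    (hL : ∀ t (ht : t < L.length), L[t] = segP l (g t) (g (t + 1))) :
    ∀ m i, i + m ≤ L.length → segP L i (i + m) = segP l (g i) (g (i + m)) := by
  intro m
  induction m with
  | zero => intro i _; simp [segP_self]
  | succ m ih =>
    intro i hi
    have hilt : i < L.length := by omega
    have hdrop : L.drop i = L[i] :: L.drop (i + 1) := List.drop_eq_getElem_cons hilt
    have h1 : segP L i (i + (m + 1)) = L[i] * segP L (i + 1) ((i + 1) + m) := by
      unfold segP
      rw [hdrop, show i + (m + 1) - i = m + 1 from by omega,
        show (i + 1) + m - (i + 1) = m from by omega, List.take_succ_cons, List.prod_cons]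
    rw [h1, hL i hilt, ih (i + 1) (by omega)]
    have h2 : i + 1 + m = i + (m + 1) := by omega
    rw [h2]
    exact segP_append l (hg (by omega)) (hg (by omega))

lemma key (M : Type*) [Monoid M] [Fintype M] :
    ∀ n : ℕ, ∃ k : ℕ, ∀ S : Submonoid M, (S : Set M).ncard ≤ n →
      ∀ l : List M, k ≤ l.length → (∀ x ∈ l, x ∈ S) →
        ∃ i j : ℕ, i < j ∧ j ≤ l.length ∧ IsIdempotentElem (segP l i j) := by
  classical
  intro n
  induction n with
  | zero =>
    refine ⟨1, fun S hS => absurd hS ?_⟩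
    have hpos : 0 < (S : Set M).ncard :=
      (Set.ncard_pos (Set.toFinite _)).mpr ⟨1, S.one_mem⟩
    omega
  | succ n ihn =>
    obtain ⟨k', ih⟩ := ihn
    set k'' := k' + 1 with hk''
    refine ⟨Fintype.card M * (k'' + 1), ?_⟩
    set k := Fintype.card M * (k'' + 1) with hk
    intro S hS l hlen hmem
    -- pigeonhole on prefix products
    have hM : 0 < Fintype.card M := Fintype.card_pos
    have hcard : (Finset.univ : Finset M).card * k'' < (Finset.range (k + 1)).card := by
      rw [Finset.card_univ, Finset.card_range, hk]
      nlinarith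
    obtain ⟨v, -, hv⟩ := Finset.exists_lt_card_fiber_of_mul_lt_card_of_maps_to
      (f := fun i => (l.take i).prod)
      (fun i _ => Finset.mem_univ ((l.take i).prod)) hcard
    obtain ⟨F, hFsub, hFcard⟩ := Finset.exists_subset_card_eq (Nat.succ_le_of_lt hv)
    set e := F.orderEmbOfFin hFcard with he
    have he_filter : ∀ t : Fin (k'' + 1),
        e t ∈ Finset.range (k + 1) ∧ (l.take (e t)).prod = v := by
      intro t
      have := hFsub (F.orderEmbOfFin_mem hFcard t)
      simpa [Finset.mem_filter] using this
    have hek : ∀ t : Fin (k'' + 1), e t ≤ k := by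
      intro t
      have := Finset.mem_range.mp (he_filter t).1
      omega
    have hev : ∀ t : Fin (k'' + 1), (l.take (e t)).prod = v := fun t => (he_filter t).2
    set g : ℕ → ℕ := fun t => e ⟨min t k'', Nat.lt_succ_of_le (min_le_right _ _)⟩ with hg
    have hgmono : Monotone g := by
      intro a b hab
      exact e.monotone (by simp only [Fin.mk_le_mk]; omega)
    have hgk : ∀ t, g t ≤ k := fun t => hek ⟨min t k'', Nat.lt_succ_of_le (min_le_right _ _)⟩
    have hgv : ∀ t, t ≤ k'' → (l.take (g t)).prod = v := by
      intro t ht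
      have hfin : (⟨min t k'', Nat.lt_succ_of_le (min_le_right _ _)⟩ : Fin (k'' + 1))
          = ⟨t, by omega⟩ := by
        ext
        simp only [Fin.val_mk]
        omega
      simp only [hg, hfin]
      exact hev _
    have hvS : v ∈ S := by
      rw [← hev 0]
      exact S.list_prod_mem (fun x hx => hmem x ((List.take_sublist _ _).mem hx))
    have hvseg : ∀ t, t < k'' → v * segP l (g t) (g (t + 1)) = v := by
      intro t ht
      have h1 := take_prod_segP l (hgmono (Nat.le_succ t))
      rw [hgv t (by omega), hgv (t + 1) (by omega)] at h1
      exact h1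
    by_cases hvv : v * v = v
    · by_cases h0 : g 0 = 0
      · -- then v = 1 and the segment from g 0 to g 1 has product 1
        have hv1 : v = 1 := by
          have h := hgv 0 (by omega)
          rw [h0] at h
          exact h.symm.trans (by simp)
        refine ⟨g 0, g 1, ?_, le_trans (hgk 1) hlen, ?_⟩
        · exact e.strictMono (by simp only [Fin.mk_lt_mk]; omega)
        · have h1 := take_prod_segP l (hgmono (by omega : (0:ℕ) ≤ 1))
          rw [hgv 0 (by omega), hgv 1 (by omega), hv1, one_mul] at h1
          simp [IsIdempotentElem, h1]
      · refine ⟨0, g 0, by omega, le_trans (hgk 0) hlen, ?_⟩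
        have hseg : segP l 0 (g 0) = v := by
          rw [← hgv 0 (by omega)]
          simp [segP]
        unfold IsIdempotentElem
        rw [hseg]
        exact hvv
    · -- pass to the strictly smaller submonoid T
      set T : Submonoid M :=
        { carrier := {x | x ∈ S ∧ v * x = v}
          one_mem' := ⟨S.one_mem, mul_one v⟩
          mul_mem' := fun {a b} ha hb =>
            ⟨S.mul_mem ha.1 hb.1, by rw [← mul_assoc, ha.2, hb.2]⟩ } with hT
      have hTsub : (T : Set M) ⊂ (S : Set M) := by
        constructor
        · intro x hx; exact hx.1
        · intro hsub
          exact hvv (hsub hvS).2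
      have hTn : (T : Set M).ncard ≤ n := by
        have := Set.ncard_lt_ncard hTsub (Set.toFinite _)
        omega
      set L' : List M := List.ofFn (fun t : Fin k'' => segP l (g t) (g (t + 1))) with hL'
      have hL'len : L'.length = k'' := by simp [hL', hk'']
      have hmem' : ∀ x ∈ L', x ∈ T := by
        intro x hx
        rw [hL', List.mem_ofFn] at hx
        obtain ⟨t, rfl⟩ := hx
        refine ⟨?_, hvseg t t.2⟩
        exact S.list_prod_mem (fun y hy =>
          hmem y (((List.take_sublist _ _).trans (List.drop_sublist _ _)).mem hy))
      obtain ⟨i', j', hij', hj'len, hidem⟩ := ih T hTn L' (by omega) hmem'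
      have hj'k : j' ≤ k'' := by omega
      have htel : segP L' i' j' = segP l (g i') (g j') := by
        have h := tele l g hgmono L'
          (fun t ht => by
            simp only [hL', List.getElem_ofFn])
          (j' - i') i' (by omega)
        rw [show i' + (j' - i') = j' from by omega] at h
        exact h
      refine ⟨g i', g j', ?_, le_trans (hgk j') hlen, ?_⟩
      · exact e.strictMono (by simp only [Fin.mk_lt_mk]; omega)
      · rw [← htel]; exact hidem

end Aux

theorem stmt_1 (M : Type*) [Monoid M] [Fintype M] :
    ∃ k : ℕ, ∀ a : Fin k → M, ∃ i j : ℕ, i < j ∧ j ≤ k ∧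
      (((List.ofFn a).drop i).take (j - i)).prod * (((List.ofFn a).drop i).take (j - i)).prod
        = (((List.ofFn a).drop i).take (j - i)).prod := by
  classical
  obtain ⟨k, hk⟩ := key M (((⊤ : Submonoid M) : Set M).ncard)
  refine ⟨k, fun a => ?_⟩
  obtain ⟨i, j, h1, h2, h3⟩ := hk ⊤ le_rfl (List.ofFn a) (by simp) (fun x _ => trivial)
  exact ⟨i, j, h1, by simpa using h2, h3⟩
end

section
/- Let f : X → Y be a block map between subshifts that is not surjective. Then f is not an epimorphism in the category of subshifts and block maps: there exist two distinct block maps g₀, g₁ : Y → {0,1}^ℤ with g₀ ∘ f = g₁ ∘ f. -/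
/-- The shift map on bi-infinite configurations. -/
def shift {S : Type*} (x : ℤ → S) : ℤ → S := fun i => x (i + 1)

/-- A subshift: a closed, shift-invariant subset of the full shift. -/
def IsSubshift {S : Type*} [TopologicalSpace S] (X : Set (ℤ → S)) : Prop :=
  IsClosed X ∧ shift '' X = X

/-- A block map: a continuous, shift-commuting map between subshifts. -/
def IsBlockMap {S R : Type*} [TopologicalSpace S] [TopologicalSpace R]
    (X : Set (ℤ → S)) (Y : Set (ℤ → R)) (f : (ℤ → S) → (ℤ → R)) : Prop :=
  Set.MapsTo f X Y ∧ ContinuousOn f X ∧ ∀ x ∈ X, f (shift x) = shift (f x)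

/-- Shift by `i` steps. -/
def shiftn {S : Type*} (i : ℤ) (x : ℤ → S) : ℤ → S := fun j => x (j + i)

lemma shift_injective {S : Type*} : Function.Injective (shift (S := S)) := by
  intro a b h
  funext j
  have := congrFun h (j - 1)
  simpa [shift] using this

lemma shiftn_zero {S : Type*} (x : ℤ → S) : shiftn 0 x = x := by
  funext j; simp [shiftn]

lemma shift_shiftn {S : Type*} (i : ℤ) (x : ℤ → S) :
    shift (shiftn i x) = shiftn (i + 1) x := by
  funext j; simp [shift, shiftn]; ring_nf

lemma shiftn_mem {S : Type*} {A : Set (ℤ → S)} (hA : shift '' A = A)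
    {y : ℤ → S} (hy : y ∈ A) (i : ℤ) : shiftn i y ∈ A := by
  induction i using Int.induction_on with
  | zero => rwa [shiftn_zero]
  | succ i ih =>
      rw [← shift_shiftn]
      rw [← hA]
      exact ⟨_, ih, rfl⟩
  | pred i ih =>
      have h1 : shift (shiftn (-i - 1) y) = shiftn (-i) y := by
        rw [shift_shiftn]; ring_nf
      rw [← hA] at ih
      obtain ⟨z, hz, hzeq⟩ := ih
      have hz2 : z = shiftn (-i - 1) y := shift_injective (by rw [hzeq, h1])
      rw [← hz2]
      exact hz

lemma continuous_shiftn {S : Type*} [TopologicalSpace S] (i : ℤ) :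
    Continuous (shiftn (S := S) i) :=
  continuous_pi fun j => continuous_apply (j + i)

theorem stmt_3 {S R : Type*} [TopologicalSpace S] [DiscreteTopology S] [Finite S]
    [TopologicalSpace R] [DiscreteTopology R] [Finite R]
    (X : Set (ℤ → S)) (Y : Set (ℤ → R)) (hX : IsSubshift X) (hY : IsSubshift Y)
    (f : (ℤ → S) → (ℤ → R)) (hf : IsBlockMap X Y f) (hnsurj : f '' X ≠ Y) :
    ∃ g₀ g₁ : (ℤ → R) → (ℤ → Bool),
      IsBlockMap Y (Set.univ : Set (ℤ → Bool)) g₀ ∧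
      IsBlockMap Y (Set.univ : Set (ℤ → Bool)) g₁ ∧
      ¬ Set.EqOn g₀ g₁ Y ∧ Set.EqOn (g₀ ∘ f) (g₁ ∘ f) X := by
  obtain ⟨hfYmap, hfcont, hfcomm⟩ := hf
  -- the image is compact, hence closed
  have hXcomp : IsCompact X := hX.1.isCompact
  have himcomp : IsCompact (f '' X) := hXcomp.image_of_continuousOn hfcont
  have himclosed : IsClosed (f '' X) := himcomp.isClosed
  -- the image is a proper subset of Y
  have himsub : f '' X ⊆ Y := Set.mapsTo_iff_image_subset.mp hfYmap
  obtain ⟨y₀, hy₀Y, hy₀im⟩ : ∃ y₀, y₀ ∈ Y ∧ y₀ ∉ f '' X := by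
    by_contra h
    push_neg at h
    exact hnsurj (Set.Subset.antisymm himsub h)
  -- the image is shift invariant
  have himinv : shift '' (f '' X) = f '' X := by
    rw [← Set.image_comp]
    have : Set.EqOn (shift ∘ f) (f ∘ shift) X := fun x hx => (hfcomm x hx).symm
    rw [Set.image_congr this, Set.image_comp, hX.2]
  -- find a clopen set around y₀ avoiding the image
  obtain ⟨U, hUclopen, hy₀U, hUsub⟩ :=
    compact_exists_isClopen_in_isOpen himclosed.isOpen_compl hy₀im
  -- define the two maps
  refine ⟨fun _ _ => false, fun y i => U.boolIndicator (shiftn i y), ?_, ?_, ?_, ?_⟩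
  · exact ⟨fun _ _ => Set.mem_univ _, continuousOn_const, fun _ _ => rfl⟩
  · refine ⟨fun _ _ => Set.mem_univ _, ?_, ?_⟩
    · apply Continuous.continuousOn
      apply continuous_pi
      intro i
      exact (continuous_boolIndicator_iff_isClopen U).mpr hUclopen |>.comp
        (continuous_shiftn i)
    · intro y _
      funext i
      simp only [shift]
      congr 1
      rw [show shiftn i (shift y) = shiftn (i + 1) y from ?_]
      funext j; simp [shiftn, shift]; ring_nf
  · intro h
    have h2 := congrFun (h hy₀Y) 0
    simp only [shiftn_zero] at h2
    have h1 : U.boolIndicator y₀ = true := (U.mem_iff_boolIndicator y₀).mp hy₀U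
    rw [h1] at h2
    exact Bool.false_ne_true h2
  · intro x hx
    funext i
    simp only [Function.comp]
    have hmem : shiftn i (f x) ∈ f '' X := shiftn_mem himinv ⟨x, hx, rfl⟩ i
    have hnotU : shiftn i (f x) ∉ U := fun h => hUsub h hmem
    exact ((U.notMem_iff_boolIndicator _).mp hnotU).symm
end

section
/- Let X be a subshift, f : X → X a block map, and suppose f has a surjective iterate-invariant observable in the following sense: let P be a partially ordered set, g : X → P^ℤ a block map with g(f(x))₀ ≤ g(x)₀ for all x ∈ X. If X is a subshift in which shift-periodic points are dense, then g ∘ f = g. -/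
lemma shift_iterate {S : Type*} (x : ℤ → S) (n : ℕ) (i : ℤ) :
    shift^[n] x i = x (i + n) := by
  induction n generalizing i with
  | zero => simp
  | succ n ih =>
    rw [Function.iterate_succ_apply']
    show shift^[n] x (i + 1) = x (i + (n + 1))
    rw [ih]
    congr 1
    ring

lemma per_mul {S : Type*} {x : ℤ → S} {p : ℕ} (h : ∀ i, x (i + p) = x i) :
    ∀ (k : ℤ) (i : ℤ), x (i + p * k) = x i := by
  intro k
  induction k using Int.induction_on with
  | zero => simp
  | succ k ih =>
    intro i
    have h1 := h (i + p * k)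
    have h2 := ih i
    have : i + p * (k + 1) = i + p * k + p := by ring
    rw [this, h1, h2]
  | pred k ih =>
    intro i
    have h1 := h (i - p)
    have h2 := ih (i - p)
    have : i + p * (-(k:ℤ) - 1) = (i - p) + p * (-(k:ℤ)) := by ring
    rw [this, h2]
    have : i - p + (p : ℤ) = i := by ring
    rw [this] at h1
    exact h1.symm

lemma per_finite {S : Type*} [Finite S] (p : ℕ) (hp : 0 < p) :
    Set.Finite {y : ℤ → S | shift^[p] y = y} := by
  have hF : ∀ y : {y : ℤ → S | shift^[p] y = y}, ∀ i : ℤ, y.1 (i + p) = y.1 i := by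
    intro y i
    have := congrFun y.2 i
    rwa [shift_iterate] at this
  let F : {y : ℤ → S | shift^[p] y = y} → (Fin p → S) := fun y i => y.1 i
  have hinj : Function.Injective F := by
    intro a b hab
    have key : ∀ (y : {y : ℤ → S | shift^[p] y = y}) (i : ℤ),
        y.1 i = F y ⟨(i % p).toNat, by
          have h1 : 0 ≤ i % (p:ℤ) := Int.emod_nonneg i (by exact_mod_cast hp.ne')
          have h2 : i % (p:ℤ) < p := Int.emod_lt_of_pos i (by exact_mod_cast hp)
          omega⟩ := by
      intro y i
      have h1 : 0 ≤ i % (p:ℤ) := Int.emod_nonneg i (by exact_mod_cast hp.ne')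
      have hdiv : i % (p:ℤ) + p * (i / p) = i := Int.emod_add_mul_ediv i p
      have := per_mul (hF y) (i / p) (i % p)
      rw [hdiv] at this
      rw [this]
      show _ = (y : ℤ → S) (((i % (p:ℤ)).toNat : ℕ) : ℤ)
      rw [Int.toNat_of_nonneg h1]
    ext i
    rw [key a i, key b i, hab]
  have : Finite {y : ℤ → S | shift^[p] y = y} := Finite.of_injective F hinj
  exact Set.toFinite _

lemma comm_iterate {S R : Type*} (X : Set (ℤ → S)) (hmemS : ∀ x ∈ X, shift x ∈ X)
    (h : (ℤ → S) → (ℤ → R)) (hc : ∀ x ∈ X, h (shift x) = shift (h x)) :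
    ∀ (n : ℕ), ∀ x ∈ X, h (shift^[n] x) = shift^[n] (h x) := by
  intro n
  induction n with
  | zero => exact fun x _ => rfl
  | succ n ih =>
    intro x hx
    rw [Function.iterate_succ_apply, Function.iterate_succ_apply, ih _ (hmemS x hx), hc x hx]

theorem stmt_14 {S P : Type*} [TopologicalSpace S] [DiscreteTopology S] [Finite S]
    [PartialOrder P] [Finite P] [TopologicalSpace P] [DiscreteTopology P]
    (X : Set (ℤ → S)) (hX : IsSubshift X)
    (hdense : X ⊆ closure {x ∈ X | ∃ p : ℕ, 0 < p ∧ shift^[p] x = x})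
    (f : (ℤ → S) → (ℤ → S)) (hf : IsBlockMap X X f) (hbij : Set.BijOn f X X)
    (g : (ℤ → S) → (ℤ → P)) (hg : IsBlockMap X (Set.univ : Set (ℤ → P)) g)
    (hmono : ∀ x ∈ X, g (f x) 0 ≤ g x 0) :
    Set.EqOn (g ∘ f) g X := by
  obtain ⟨hXc, hXs⟩ := hX
  obtain ⟨hfM, hfC, hfcomm⟩ := hf
  obtain ⟨-, hgC, hgcomm⟩ := hg
  -- shift preserves X
  have hmemS : ∀ x ∈ X, shift x ∈ X := fun x hx => hXs ▸ Set.mem_image_of_mem shift hx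
  have hmemIt : ∀ (n : ℕ), ∀ x ∈ X, shift^[n] x ∈ X := by
    intro n
    induction n with
    | zero => exact fun x hx => hx
    | succ n ih => intro x hx; rw [Function.iterate_succ_apply]; exact ih _ (hmemS x hx)
  have hfIt := comm_iterate X hmemS f hfcomm
  have hgIt := comm_iterate X hmemS g hgcomm
  -- f iterates preserve X and are injective on X
  have hfItM : ∀ n : ℕ, Set.MapsTo f^[n] X X := fun n => hfM.iterate n
  have hfItInj : ∀ n : ℕ, Set.InjOn f^[n] X := by
    intro n
    induction n with
    | zero => exact Set.injOn_id X
    | succ n ih =>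
      rw [Function.iterate_succ']
      exact hbij.injOn.comp ih (hfItM n)
  -- Step A: every shift-periodic point of X is f-periodic
  have stepA : ∀ x ∈ X, ∀ p : ℕ, 0 < p → shift^[p] x = x → ∃ k : ℕ, 0 < k ∧ f^[k] x = x := by
    intro x hx p hp hper
    set K : Set (ℤ → S) := X ∩ {y | shift^[p] y = y} with hK
    have hKfin : K.Finite := Set.Finite.inter_of_right (per_finite p hp) X
    have hmem : ∀ n : ℕ, f^[n] x ∈ K := by
      intro n
      induction n with
      | zero => exact ⟨hx, hper⟩
      | succ n ih =>
        rw [Function.iterate_succ_apply']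
        obtain ⟨h1, h2⟩ := ih
        refine ⟨hfM h1, ?_⟩
        show shift^[p] (f (f^[n] x)) = f (f^[n] x)
        rw [← hfIt p _ h1, h2]
      -- done
    haveI := hKfin.to_subtype
    obtain ⟨m, n, hmn, heq⟩ :=
      Finite.exists_ne_map_eq_of_infinite (fun n : ℕ => (⟨f^[n] x, hmem n⟩ : K))
    have heq' : f^[m] x = f^[n] x := congrArg Subtype.val heq
    rcases Nat.lt_or_gt_of_ne hmn with h | h
    · refine ⟨n - m, by omega, ?_⟩
      apply hfItInj m (hfItM _ hx) hx
      rw [← Function.iterate_add_apply]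
      have : m + (n - m) = n := by omega
      rw [this, ← heq']
    · refine ⟨m - n, by omega, ?_⟩
      apply hfItInj n (hfItM _ hx) hx
      rw [← Function.iterate_add_apply]
      have : n + (m - n) = m := by omega
      rw [this, heq']
  -- Step B0: g (f x) 0 = g x 0 on periodic points
  have stepB0 : ∀ x ∈ X, (∃ p : ℕ, 0 < p ∧ shift^[p] x = x) → g (f x) 0 = g x 0 := by
    intro x hx ⟨p, hp, hper⟩
    obtain ⟨k, hk, hfk⟩ := stepA x hx p hp hper
    have hXn : ∀ n : ℕ, f^[n] x ∈ X := fun n => hfItM n hx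
    have anti : Antitone (fun n : ℕ => g (f^[n] x) 0) := by
      apply antitone_nat_of_succ_le
      intro n
      rw [Function.iterate_succ_apply']
      exact hmono _ (hXn n)
    have h1 : g (f^[1] x) 0 ≤ g (f^[0] x) 0 := anti (by omega)
    have h2 : g (f^[k] x) 0 ≤ g (f^[1] x) 0 := anti (by omega)
    rw [hfk] at h2
    simpa using le_antisymm h1 h2
  -- Step B: g (f x) = g x on periodic points
  have stepB : ∀ x ∈ {x ∈ X | ∃ p : ℕ, 0 < p ∧ shift^[p] x = x}, g (f x) = g x := by
    rintro x ⟨hx, p, hp, hper⟩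
    ext i
    -- periodicity of g x and g (f x)
    have hgxper : ∀ j, g x (j + p) = g x j := by
      intro j
      have h := hgIt p x hx
      rw [hper] at h
      have := congrFun h j
      rw [shift_iterate] at this
      exact this.symm
    have hfxX : f x ∈ X := hfM hx
    have hfxper : shift^[p] (f x) = f x := by rw [← hfIt p x hx, hper]
    have hgfxper : ∀ j, g (f x) (j + p) = g (f x) j := by
      intro j
      have h := hgIt p (f x) hfxX
      rw [hfxper] at h
      have := congrFun h j
      rw [shift_iterate] at this
      exact this.symm
    -- reduce to nonnegative index
    set m : ℕ := i.natAbs with hm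
    have hnn : 0 ≤ i + p * m := by
      have h1 : (1:ℤ) ≤ p := by exact_mod_cast hp
      have h3 : -i ≤ (m:ℤ) := by omega
      have h2 : (m:ℤ) ≤ p * m := le_mul_of_one_le_left (Int.natCast_nonneg m) h1
      linarith
    set n : ℕ := (i + p * m).toNat with hn
    have hni : (n : ℤ) = i + p * m := Int.toNat_of_nonneg hnn
    have hshiftn : shift^[n] x ∈ X := hmemIt n x hx
    have hshiftnper : shift^[p] (shift^[n] x) = shift^[n] x := by
      rw [← Function.iterate_add_apply, Nat.add_comm, Function.iterate_add_apply, hper]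
    have key := stepB0 (shift^[n] x) hshiftn ⟨p, hp, hshiftnper⟩
    rw [hfIt n x hx] at key
    rw [hgIt n (f x) hfxX, hgIt n x hx] at key
    rw [shift_iterate, shift_iterate, zero_add, hni] at key
    calc g (f x) i = g (f x) (i + p * m) := (per_mul hgfxper m i).symm
      _ = g x (i + p * m) := key
      _ = g x i := per_mul hgxper m i
  -- conclude by density and continuity
  have hgf : ContinuousOn (g ∘ f) X := hgC.comp hfC hfM
  exact Set.EqOn.of_subset_closure (fun y hy => stepB y hy) hgf hgC
    (fun y hy => hy.1) hdense
end
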